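/- Let G be a connected weighted graph on n vertices with all degrees positive which is not a complete weighted graph (equivalently 0 < λ_1 < λ_{n−1}). Then diam(G) ≤ ⌈ log(vol(G)/δ) / log((λ_{n−1}+λ_1)/(λ_{n−1}−λ_1)) ⌉, where δ is the minimum degree of G. -/

import Mathlib

open Matrix Polynomial

noncomputable section

/-- The degree of a vertex in a weighted graph with weight function `w`. -/
def wdeg {V : Type*} [Fintype V] (w : V → V → ℝ) (x : V) : ℝ := ∑ y, w x y

/-- The diagonal matrix `T^{-1/2}` of a weighted graph. -/
def invSqrtT {V : Type*} [Fintype V] [DecidableEq V] (w : V → V → ℝ) : Matrix V V ℝ :=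
  Matrix.diagonal fun x => (Real.sqrt (wdeg w x))⁻¹

/-- The (normalized) Laplacian `I - T^{-1/2} A T^{-1/2}` of a weighted graph. -/
def wLap {V : Type*} [Fintype V] [DecidableEq V] (w : V → V → ℝ) : Matrix V V ℝ :=
  1 - invSqrtT w * Matrix.of w * invSqrtT w

/-- The volume of a set of vertices of a weighted graph. -/
def wvol {V : Type*} [Fintype V] (w : V → V → ℝ) (X : Finset V) : ℝ := ∑ x ∈ X, wdeg w x

/-- `μ` lists the eigenvalues of the square matrix `M` (with multiplicity)
in non-decreasing order. -/
def IsEigenSeq {m : Type*} [Fintype m] [DecidableEq m] (M : Matrix m m ℝ) {n : ℕ}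
    (μ : Fin n → ℝ) : Prop :=
  Monotone μ ∧ M.charpoly = ∏ i, (X - C (μ i))

/-- The underlying simple graph of a weighted graph: vertices are adjacent when the
weight between them is positive (for a symmetric weight with zero diagonal this is
the usual adjacency). -/
def wGraph {V : Type*} (w : V → V → ℝ) : SimpleGraph V where
  Adj x y := x ≠ y ∧ 0 < w x y ∧ 0 < w y x
  symm := ⟨fun _ _ ⟨h1, h2, h3⟩ => ⟨h1.symm, h3, h2⟩⟩
  loopless := ⟨fun _ h => h.1 rfl⟩


/-- The diameter of a weighted graph: the maximum graph distance between two vertices. -/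
def wDiam {V : Type*} (w : V → V → ℝ) : ℕ :=
  sSup {k | ∃ x y : V, (wGraph w).dist x y = k}

set_option maxHeartbeats 1600000

namespace DiamAux

variable {V : Type*} [Fintype V] [DecidableEq V]

lemma charpoly_conj (U W : Matrix V V ℝ) (d : V → ℝ)
    (hUW : U * W = 1) (hWU : W * U = 1) :
    (U * Matrix.diagonal d * W).charpoly = ∏ i, (X - C (d i)) := by
  classical
  set f : Matrix V V ℝ →+* Matrix V V ℝ[X] := (C : ℝ →+* ℝ[X]).mapMatrix with hf
  have hcm : charmatrix (U * Matrix.diagonal d * W)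
      = f U * charmatrix (Matrix.diagonal d) * f W := by
    unfold charmatrix
    have h1 : f U * (Matrix.scalar V (X : ℝ[X])) * f W = Matrix.scalar V (X : ℝ[X]) := by
      have hcomm : Commute (Matrix.scalar V (X : ℝ[X])) (f U) :=
        Matrix.scalar_commute _ (fun r' => Commute.all _ _) _
      calc f U * (Matrix.scalar V (X : ℝ[X])) * f W
          = (Matrix.scalar V (X : ℝ[X])) * (f U * f W) := by
            rw [← hcomm.eq, Matrix.mul_assoc]
        _ = Matrix.scalar V (X : ℝ[X]) := by
            rw [← _root_.map_mul, hUW, _root_.map_one, mul_one]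
    rw [mul_sub, sub_mul, h1, ← _root_.map_mul, ← _root_.map_mul]
  have hdet : (U * Matrix.diagonal d * W).charpoly
      = (charmatrix (Matrix.diagonal d)).det := by
    rw [Matrix.charpoly, hcm, Matrix.det_mul, Matrix.det_mul]
    have h2 : (f U).det * (f W).det = 1 := by
      rw [← Matrix.det_mul, ← _root_.map_mul, hUW, _root_.map_one, Matrix.det_one]
    have : (f U).det * (charmatrix (Matrix.diagonal d)).det * (f W).det
        = (charmatrix (Matrix.diagonal d)).det * ((f U).det * (f W).det) := by ring
    rw [this, h2, mul_one]
  rw [hdet]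
  have hdiag : charmatrix (Matrix.diagonal d) = Matrix.diagonal (fun i => X - C (d i)) := by
    ext i j
    by_cases h : i = j
    · subst h; simp
    · simp [Matrix.charmatrix_apply_ne _ _ _ h, Matrix.diagonal_apply_ne _ h]
  rw [hdiag, Matrix.det_diagonal]

lemma roots_prod_X_sub_C_eq {ι : Type*} [Fintype ι] (f : ι → ℝ) :
    (∏ i, (X - C (f i))).roots = Multiset.map f Finset.univ.val := by
  have h1 : (∏ i : ι, (X - C (f i)))
      = (Multiset.map (fun r : ℝ => X - C r) (Multiset.map f Finset.univ.val)).prod := by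
    rw [Finset.prod_eq_multiset_prod, Multiset.map_map]
    rfl
  rw [h1, Polynomial.roots_multiset_prod_X_sub_C]

lemma conj_pow (U W D : Matrix V V ℝ) (hUW : U * W = 1) (hWU : W * U = 1) (k : ℕ) :
    (U * D * W) ^ k = U * D ^ k * W := by
  induction k with
  | zero => simp [hUW]
  | succ k ih =>
      rw [pow_succ, ih, pow_succ]
      calc U * D ^ k * W * (U * D * W) = U * D ^ k * (W * U) * D * W := by
            simp only [Matrix.mul_assoc]
        _ = U * (D ^ k * D) * W := by rw [hWU]; simp only [Matrix.mul_assoc, Matrix.one_mul]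

lemma aeval_conj_apply (U W : Matrix V V ℝ) (d : V → ℝ)
    (hUW : U * W = 1) (hWU : W * U = 1) (p : ℝ[X]) (u v : V) :
    (Polynomial.aeval (U * Matrix.diagonal d * W) p) u v
      = ∑ j, p.eval (d j) * (U u j * W j v) := by
  classical
  rw [Polynomial.aeval_eq_sum_range]
  have hpow : ∀ i : ℕ, ((U * Matrix.diagonal d * W) ^ i) u v
      = ∑ j, d j ^ i * (U u j * W j v) := by
    intro i
    rw [conj_pow U W _ hUW hWU, Matrix.diagonal_pow, Matrix.mul_apply]
    refine Finset.sum_congr rfl fun j _ => ?_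
    rw [Matrix.mul_diagonal]
    simp [Pi.pow_apply]
    ring
  have : (∑ i ∈ Finset.range (p.natDegree + 1),
        p.coeff i • (U * Matrix.diagonal d * W) ^ i) u v
      = ∑ i ∈ Finset.range (p.natDegree + 1),
        p.coeff i * ((U * Matrix.diagonal d * W) ^ i) u v := by
    rw [Matrix.sum_apply]
    refine Finset.sum_congr rfl fun i _ => ?_
    simp
  rw [this]
  simp_rw [hpow, Finset.mul_sum]
  rw [Finset.sum_comm]
  refine Finset.sum_congr rfl fun j _ => ?_
  rw [Polynomial.eval_eq_sum_range, Finset.sum_mul]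
  refine Finset.sum_congr rfl fun i _ => ?_
  ring

lemma pow_apply_eq_zero_of_dist (M : Matrix V V ℝ) (G : SimpleGraph V) (hG : G.Connected)
    (hM : ∀ x y, ¬ G.Adj x y → M x y = 0) :
    ∀ k u v, k < G.dist u v → (M ^ k) u v = 0 := by
  intro k
  induction k with
  | zero =>
      intro u v h
      have huv : u ≠ v := by
        rintro rfl
        simp [SimpleGraph.dist_self] at h
      simp [Matrix.one_apply_ne huv]
  | succ k ih =>
      intro u v h
      rw [pow_succ', Matrix.mul_apply]
      refine Finset.sum_eq_zero fun x _ => ?_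
      by_cases hadj : G.Adj u x
      · have h1 : G.dist u x ≤ 1 := by
          have := SimpleGraph.dist_le (SimpleGraph.Walk.cons hadj SimpleGraph.Walk.nil)
          simpa using this
        have htri := hG.dist_triangle (u := u) (v := x) (w := v)
        have hx : k < G.dist x v := by omega
        rw [ih x v hx, mul_zero]
      · rw [hM u x hadj, zero_mul]

lemma aeval_apply_eq_zero_of_dist (M : Matrix V V ℝ) (G : SimpleGraph V) (hG : G.Connected)
    (hM : ∀ x y, ¬ G.Adj x y → M x y = 0) (p : ℝ[X]) (u v : V)
    (h : p.natDegree < G.dist u v) :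
    (Polynomial.aeval M p) u v = 0 := by
  rw [Polynomial.aeval_eq_sum_range, Matrix.sum_apply]
  refine Finset.sum_eq_zero fun i hi => ?_
  have hi' : i < G.dist u v := by
    simp only [Finset.mem_range] at hi; omega
  simp [pow_apply_eq_zero_of_dist M G hG hM i u v hi']

end DiamAux

/-- eigenvalue bound on the diameter of a connected, non-complete
weighted graph. -/
theorem stmt_2 {V : Type*} [Fintype V] [DecidableEq V]
    (w : V → V → ℝ)
    (hsymm : ∀ u v, w u v = w v u)
    (hnonneg : ∀ u v, 0 ≤ w u v)
    (hloop : ∀ v, w v v = 0)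
    (hdegpos : ∀ x, 0 < wdeg w x)
    (hconn : (wGraph w).Connected)
    (n : ℕ) (hn : Fintype.card V = n) (hn2 : 2 ≤ n)
    (μ : Fin n → ℝ) (hμ : IsEigenSeq (wLap w) μ)
    (hlam1pos : 0 < μ ⟨1, by omega⟩)
    (hlamgap : μ ⟨1, by omega⟩ < μ ⟨n - 1, by omega⟩)
    (δ : ℝ) (hδ : IsLeast (Set.range (wdeg w)) δ) :
    (wDiam w : ℤ) ≤
      ⌈Real.log (wvol w Finset.univ / δ) /
        Real.log ((μ ⟨n - 1, by omega⟩ + μ ⟨1, by omega⟩) /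
          (μ ⟨n - 1, by omega⟩ - μ ⟨1, by omega⟩))⌉ := by
  classical
  set lam1 : ℝ := μ ⟨1, by omega⟩ with hlam1def
  set lamn : ℝ := μ ⟨n - 1, by omega⟩ with hlamndef
  set vol : ℝ := wvol w Finset.univ with hvoldef
  set a : ℝ := Real.log (vol / δ) / Real.log ((lamn + lam1) / (lamn - lam1)) with hadef
  -- basic positivity facts
  have hVne : Nonempty V := Fintype.card_pos_iff.mp (by omega)
  obtain ⟨x₀, hx₀⟩ := hδ.1
  have hδpos : 0 < δ := hx₀ ▸ hdegpos x₀
  have hδle : ∀ x, δ ≤ wdeg w x := fun x => hδ.2 ⟨x, rfl⟩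
  have hvolpos : 0 < vol :=
    Finset.sum_pos (fun x _ => hdegpos x) Finset.univ_nonempty
  have hdlevol : ∀ x, wdeg w x ≤ vol := fun x =>
    Finset.single_le_sum (fun i _ => (hdegpos i).le) (Finset.mem_univ x)
  have hδvol : δ ≤ vol := (hδle x₀).trans (hdlevol x₀)
  have hδvolle1 : δ / vol ≤ 1 := (div_le_one hvolpos).2 hδvol
  have hδvolpos : 0 < δ / vol := div_pos hδpos hvolpos
  have hs : 0 < lamn + lam1 := by linarith
  have hgap : 0 < lamn - lam1 := by linarith
  -- the matrix M with L = 1 - M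
  set M : Matrix V V ℝ := invSqrtT w * Matrix.of w * invSqrtT w with hMdef
  have hLM : wLap w = 1 - M := rfl
  have hsqrtpos : ∀ x, 0 < Real.sqrt (wdeg w x) := fun x => Real.sqrt_pos.2 (hdegpos x)
  have hMapply : ∀ x y, M x y
      = (Real.sqrt (wdeg w x))⁻¹ * w x y * (Real.sqrt (wdeg w y))⁻¹ := by
    intro x y
    rw [hMdef, invSqrtT, Matrix.mul_diagonal, Matrix.diagonal_mul, Matrix.of_apply]
  have hM0 : ∀ x y, ¬ (wGraph w).Adj x y → M x y = 0 := by
    intro x y hadj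
    rcases eq_or_ne x y with rfl | hne
    · rw [hMapply, hloop, mul_zero, zero_mul]
    · have hw : w x y = 0 := by
        by_contra hne0
        have hpos : 0 < w x y := (hnonneg x y).lt_of_ne (Ne.symm hne0)
        exact hadj (show x ≠ y ∧ 0 < w x y ∧ 0 < w y x from ⟨hne, hpos, by rw [hsymm y x]; exact hpos⟩)
      rw [hMapply, hw, mul_zero, zero_mul]
  have hMsymm : ∀ x y, M x y = M y x := by
    intro x y; rw [hMapply, hMapply, hsymm]; ring
  have hHerm : (wLap w).IsHermitian := by
    show (wLap w)ᴴ = wLap w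
    apply Matrix.ext
    intro x y
    rw [Matrix.conjTranspose_apply, star_trivial, hLM]
    simp only [Matrix.sub_apply]
    rw [hMsymm y x]
    congr 1
    by_cases h : x = y
    · subst h; rfl
    · rw [Matrix.one_apply_ne h, Matrix.one_apply_ne (Ne.symm h)]
  -- spectral decomposition
  set U : Matrix V V ℝ := (hHerm.eigenvectorUnitary : Matrix V V ℝ) with hUdef
  set ξ : V → ℝ := hHerm.eigenvalues with hxidef
  have hUW : U * star U = 1 :=
    (Matrix.mem_unitaryGroup_iff).mp hHerm.eigenvectorUnitary.2
  have hWU : star U * U = 1 :=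
    (Matrix.mem_unitaryGroup_iff').mp hHerm.eigenvectorUnitary.2
  have hofReal : (RCLike.ofReal ∘ ξ : V → ℝ) = ξ := by
    funext j; simp
  have hspec : wLap w = U * Matrix.diagonal ξ * star U := by
    conv_lhs => rw [hHerm.spectral_theorem]
    rw [hofReal]
    rw [Unitary.conjStarAlgAut_apply]
  -- charpoly and multisets of eigenvalues
  have hchar2 : (wLap w).charpoly = ∏ j, (X - C (ξ j)) := by
    rw [hspec]; exact DiamAux.charpoly_conj U (star U) ξ hUW hWU
  have hmeq : Multiset.map μ Finset.univ.val = Multiset.map ξ Finset.univ.val := by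
    have h1 := DiamAux.roots_prod_X_sub_C_eq μ
    have h2 := DiamAux.roots_prod_X_sub_C_eq ξ
    rw [← hμ.2] at h1
    rw [← hchar2] at h2
    rw [← h1, ← h2]
  -- the Perron eigenvector
  set φ : V → ℝ := fun x => Real.sqrt (wdeg w x) with hφdef
  have hφne : φ ≠ 0 := by
    intro h
    have := congrFun h (Classical.arbitrary V)
    simp only [Pi.zero_apply] at this
    exact absurd this (ne_of_gt (hsqrtpos _))
  have hMφ : ∀ x, (M.mulVec φ) x = φ x := by
    intro x
    have hterm : ∀ y, M x y * φ y = (Real.sqrt (wdeg w x))⁻¹ * w x y := by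
      intro y
      rw [hMapply, hφdef, mul_assoc, inv_mul_cancel₀ (hsqrtpos y).ne', mul_one]
    simp only [Matrix.mulVec, dotProduct]
    rw [Finset.sum_congr rfl fun y _ => hterm y, ← Finset.mul_sum]
    have hdx : ∑ y, w x y = wdeg w x := rfl
    rw [hdx, hφdef]
    rw [show wdeg w x = Real.sqrt (wdeg w x) * Real.sqrt (wdeg w x) from
      (Real.mul_self_sqrt (hdegpos x).le).symm]
    field_simp
    rw [Real.sqrt_sq (hsqrtpos x).le, sq, mul_div_assoc, div_self (hsqrtpos x).ne', mul_one]
  have hLφ : (wLap w).mulVec φ = 0 := by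
    funext x
    rw [hLM, Matrix.sub_mulVec, Matrix.one_mulVec]
    simp only [Pi.sub_apply, Pi.zero_apply, hMφ x, sub_self]
  have hdet0 : (wLap w).det = 0 := Matrix.exists_mulVec_eq_zero_iff.mp ⟨φ, hφne, hLφ⟩
  have hdetprod : (wLap w).det = ∏ j, ξ j := by
    simpa using hHerm.det_eq_prod_eigenvalues
  have hξ0 : ∃ j, ξ j = 0 := by
    rw [hdetprod] at hdet0
    obtain ⟨j, _, hj⟩ := Finset.prod_eq_zero_iff.mp hdet0
    exact ⟨j, hj⟩
  have hizero : ∀ i : Fin n, μ i = 0 → i = ⟨0, by omega⟩ := by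
    intro i hi
    by_contra hne
    have h1le : 1 ≤ i.1 := by
      rcases Nat.eq_zero_or_pos i.1 with h | h
      · exact absurd (Fin.ext h) hne
      · omega
    have hmono := hμ.1 (show (⟨1, by omega⟩ : Fin n) ≤ i by
      rw [Fin.le_def]; simpa using h1le)
    rw [hi] at hmono
    exact absurd hmono (not_le.mpr hlam1pos)
  have hμ0 : μ ⟨0, by omega⟩ = 0 := by
    obtain ⟨j, hj⟩ := hξ0
    have hmem : (0 : ℝ) ∈ Multiset.map ξ Finset.univ.val :=
      Multiset.mem_map.2 ⟨j, by simp, hj⟩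
    rw [← hmeq] at hmem
    obtain ⟨i, _, hi⟩ := Multiset.mem_map.1 hmem
    rw [← hizero i hi]
    exact hi
  -- counting the zero eigenvalue
  have hfilμ : Finset.filter (fun i => (0:ℝ) = μ i) Finset.univ
      = {(⟨0, by omega⟩ : Fin n)} := by
    ext i
    simp only [Finset.mem_filter, Finset.mem_univ, true_and, Finset.mem_singleton]
    constructor
    · intro h; exact hizero i h.symm
    · rintro rfl; exact hμ0.symm
  have hcntμ : Multiset.count (0:ℝ) (Multiset.map μ Finset.univ.val) = 1 := by
    rw [Multiset.count_map, ← Finset.filter_val, hfilμ]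
    rfl
  have hcntξ : (Finset.filter (fun j => (0:ℝ) = ξ j) Finset.univ).card = 1 := by
    have h := hcntμ
    rw [hmeq, Multiset.count_map, ← Finset.filter_val] at h
    exact h
  obtain ⟨j₀, hj₀set⟩ := Finset.card_eq_one.mp hcntξ
  have hξj₀ : ξ j₀ = 0 := by
    have : j₀ ∈ Finset.filter (fun j => (0:ℝ) = ξ j) Finset.univ := by
      rw [hj₀set]; exact Finset.mem_singleton_self j₀
    exact ((Finset.mem_filter.mp this).2).symm
  have hξne : ∀ j, j ≠ j₀ → ξ j ≠ 0 := by
    intro j hj h0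
    have : j ∈ ({j₀} : Finset V) := by
      rw [← hj₀set]; exact Finset.mem_filter.mpr ⟨Finset.mem_univ j, h0.symm⟩
    exact hj (Finset.mem_singleton.mp this)
  -- bounds on nonzero eigenvalues
  have hξbound : ∀ j, j ≠ j₀ → lam1 ≤ ξ j ∧ ξ j ≤ lamn := by
    intro j hj
    have hmem : ξ j ∈ Multiset.map ξ Finset.univ.val :=
      Multiset.mem_map.2 ⟨j, by simp, rfl⟩
    rw [← hmeq] at hmem
    obtain ⟨i, _, hi⟩ := Multiset.mem_map.1 hmem
    have hine : i ≠ ⟨0, by omega⟩ := by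
      intro h
      exact hξne j hj (by rw [← hi, h, hμ0])
    have h1le : 1 ≤ i.1 := by
      rcases Nat.eq_zero_or_pos i.1 with h | h
      · exact absurd (Fin.ext h) hine
      · omega
    constructor
    · rw [← hi]
      exact hμ.1 (show (⟨1, by omega⟩ : Fin n) ≤ i by rw [Fin.le_def]; simpa using h1le)
    · rw [← hi]
      refine hμ.1 (show i ≤ (⟨n - 1, by omega⟩ : Fin n) by
        rw [Fin.le_def]; have := i.2; simp; omega)
  -- kernel is one-dimensional
  have hrank : (wLap w).rank = n - 1 := by
    rw [hHerm.rank_eq_card_non_zero_eigs]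
    have hcard : Fintype.card {j // ξ j ≠ 0}
        = (Finset.filter (fun j => ξ j ≠ 0) Finset.univ).card :=
      Fintype.card_subtype _
    have hsplit := Finset.card_filter_add_card_filter_not
      (s := (Finset.univ : Finset V)) (p := fun j => ξ j ≠ 0)
    have hnegfil : Finset.filter (fun j => ¬ ξ j ≠ 0) Finset.univ
        = Finset.filter (fun j => (0:ℝ) = ξ j) Finset.univ := by
      apply Finset.filter_congr
      intro j _
      simp [eq_comm, not_not]
    rw [hnegfil, hcntξ, Finset.card_univ, hn] at hsplit
    rw [hcard]
    omega
  have hker : Module.finrank ℝ (LinearMap.ker (wLap w).mulVecLin) = 1 := by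
    have h1 := LinearMap.finrank_range_add_finrank_ker ((wLap w).mulVecLin)
    have h2 : Module.finrank ℝ (V → ℝ) = n := by
      rw [Module.finrank_fintype_fun_eq_card, hn]
    have h3 : Module.finrank ℝ (LinearMap.range (wLap w).mulVecLin) = n - 1 := hrank
    rw [h2, h3] at h1
    omega
  have hφker : φ ∈ LinearMap.ker (wLap w).mulVecLin :=
    LinearMap.mem_ker.mpr (by rw [Matrix.mulVecLin_apply]; exact hLφ)
  have hspan : Submodule.span ℝ {φ} = LinearMap.ker (wLap w).mulVecLin := by
    apply Submodule.eq_of_le_of_finrank_le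
    · rw [Submodule.span_le, Set.singleton_subset_iff]
      exact hφker
    · rw [hker, finrank_span_singleton hφne]
  have hLU : wLap w * U = U * Matrix.diagonal ξ := by
    calc wLap w * U = U * Matrix.diagonal ξ * (star U * U) := by
          rw [hspec]; simp only [Matrix.mul_assoc]
      _ = U * Matrix.diagonal ξ := by rw [hWU, Matrix.mul_one]
  have hcolker : (fun x => U x j₀) ∈ LinearMap.ker (wLap w).mulVecLin := by
    refine LinearMap.mem_ker.mpr ?_
    rw [Matrix.mulVecLin_apply]
    funext x
    have hx : (wLap w).mulVec (fun y => U y j₀) x = (wLap w * U) x j₀ := by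
      simp [Matrix.mulVec, dotProduct, Matrix.mul_apply]
    rw [hx, hLU, Matrix.mul_diagonal, hξj₀, mul_zero]
    rfl
  obtain ⟨c, hc⟩ : ∃ c : ℝ, c • φ = (fun x => U x j₀) :=
    Submodule.mem_span_singleton.mp (hspan ▸ hcolker)
  have hUcol : ∀ x, U x j₀ = c * Real.sqrt (wdeg w x) := by
    intro x
    have := congrFun hc x
    simpa [hφdef] using this.symm
  have hcolnorm : ∑ x, U x j₀ ^ 2 = 1 := by
    have h := congrArg (fun A : Matrix V V ℝ => A j₀ j₀) hWU
    simp only [Matrix.mul_apply, Matrix.one_apply_eq] at h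
    rw [← h]
    refine Finset.sum_congr rfl fun x _ => ?_
    rw [Matrix.star_apply, star_trivial, sq]
  have hc2 : c ^ 2 * vol = 1 := by
    have : ∑ x, U x j₀ ^ 2 = c ^ 2 * vol := by
      rw [hvoldef, wvol, Finset.mul_sum]
      refine Finset.sum_congr rfl fun x _ => ?_
      rw [hUcol, mul_pow, Real.sq_sqrt (hdegpos x).le]
    rw [← this, hcolnorm]
  have hc2' : c ^ 2 = 1 / vol := by
    field_simp at hc2 ⊢
    linarith [hc2]
  have hkey : ∀ x y : V, U x j₀ * U y j₀
      = Real.sqrt (wdeg w x) * Real.sqrt (wdeg w y) / vol := by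
    intro x y
    rw [hUcol, hUcol]
    have : c * Real.sqrt (wdeg w x) * (c * Real.sqrt (wdeg w y))
        = c ^ 2 * (Real.sqrt (wdeg w x) * Real.sqrt (wdeg w y)) := by ring
    rw [this, hc2']
    ring
  have hUj₀sq : ∀ x, U x j₀ ^ 2 = wdeg w x / vol := by
    intro x
    rw [hUcol, mul_pow, Real.sq_sqrt (hdegpos x).le, hc2']
    ring
  have hrow : ∀ u, ∑ j, U u j ^ 2 = 1 := by
    intro u
    have h := congrArg (fun A : Matrix V V ℝ => A u u) hUW
    simp only [Matrix.mul_apply, Matrix.one_apply_eq] at h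
    rw [← h]
    refine Finset.sum_congr rfl fun j _ => ?_
    rw [Matrix.star_apply, star_trivial, sq]
  -- numerics: choice of t
  have hR0 : 1 < (lamn + lam1) / (lamn - lam1) := by
    rw [one_lt_div hgap]; linarith
  have hvolδ1 : 1 ≤ vol / δ := (one_le_div hδpos).2 hδvol
  have hloga : 0 ≤ Real.log (vol / δ) := Real.log_nonneg hvolδ1
  have hlogR0 : 0 < Real.log ((lamn + lam1) / (lamn - lam1)) := Real.log_pos hR0
  have ha0 : 0 ≤ a := div_nonneg hloga hlogR0.le
  set t : ℕ := (⌈a⌉).toNat with htdef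
  have htZ : (t : ℤ) = ⌈a⌉ := Int.toNat_of_nonneg (Int.ceil_nonneg ha0)
  have hta : a ≤ (t : ℝ) := by
    have : ((t : ℤ) : ℝ) = (t : ℝ) := by push_cast; ring
    rw [← this, htZ]
    exact Int.le_ceil a
  set q : ℝ := (lamn - lam1) / (lamn + lam1) with hqdef
  have hqpos : 0 < q := div_pos hgap hs
  have hq1 : q < 1 := (div_lt_one hs).2 (by linarith)
  have hεδ : q ^ t ≤ δ / vol := by
    have h1 : Real.log (vol / δ) ≤ (t : ℝ) * Real.log ((lamn + lam1) / (lamn - lam1)) := by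
      rw [hadef, div_le_iff₀ hlogR0] at hta
      linarith [hta]
    have h2 : vol / δ ≤ ((lamn + lam1) / (lamn - lam1)) ^ t := by
      have hlog : Real.log (vol / δ) ≤ Real.log (((lamn + lam1) / (lamn - lam1)) ^ t) := by
        rw [Real.log_pow]; exact h1
      have hx : (0:ℝ) < vol / δ := div_pos hvolpos hδpos
      have hy : (0:ℝ) < ((lamn + lam1) / (lamn - lam1)) ^ t := by positivity
      exact (Real.log_le_log_iff hx hy).1 hlog
    have hqinv : q = ((lamn + lam1) / (lamn - lam1))⁻¹ := by
      rw [hqdef, inv_div]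
    have hδvoleq : δ / vol = (vol / δ)⁻¹ := by
      rw [inv_div]
    rw [hqinv, inv_pow, hδvoleq]
    exact inv_anti₀ (div_pos hvolpos hδpos) h2
  have hεpos : 0 < q ^ t := pow_pos hqpos t
  -- the polynomial
  set p : ℝ[X] := (C 1 - C (2 / (lamn + lam1)) * X) ^ t with hpdef
  have hpeval : ∀ x : ℝ, p.eval x = (1 - (2 / (lamn + lam1)) * x) ^ t := by
    intro x
    rw [hpdef]
    simp
  have hp0 : p.eval 0 = 1 := by rw [hpeval]; simp
  have hpdeg : p.natDegree ≤ t := by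
    rw [hpdef]
    refine le_trans (Polynomial.natDegree_pow_le) ?_
    have h01 : (C (1:ℝ) - C (2 / (lamn + lam1)) * X).natDegree ≤ 1 := by
      refine le_trans (Polynomial.natDegree_sub_le _ _) ?_
      apply max_le
      · simp
      · exact le_trans (Polynomial.natDegree_C_mul_le _ _) (by simp)
    calc t * (C (1:ℝ) - C (2 / (lamn + lam1)) * X).natDegree ≤ t * 1 :=
          Nat.mul_le_mul_left t h01
      _ = t := mul_one t
  have hpbound : ∀ x : ℝ, lam1 ≤ x → x ≤ lamn → |p.eval x| ≤ q ^ t := by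
    intro x h1 h2
    rw [hpeval, abs_pow, hqdef]
    apply pow_le_pow_left₀ (abs_nonneg _)
    have hrw : 1 - (2 / (lamn + lam1)) * x = ((lamn + lam1) - 2 * x) / (lamn + lam1) := by
      field_simp
    rw [hrw, abs_div, abs_of_pos hs]
    have habs : |(lamn + lam1) - 2 * x| ≤ lamn - lam1 :=
      abs_le.2 ⟨by linarith, by linarith⟩
    exact (div_le_div_iff_of_pos_right hs).mpr habs
  -- every pair of vertices is within distance t
  have hdistle : ∀ u v : V, (wGraph w).dist u v ≤ t := by
    intro u v
    by_contra hlt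
    push_neg at hlt
    set pc : ℝ[X] := p.comp (1 - X) with hpcdef
    have hdegc : pc.natDegree ≤ t := by
      refine le_trans Polynomial.natDegree_comp_le ?_
      have h1X : (1 - X : ℝ[X]).natDegree = 1 := by
        have hh : (1 - X : ℝ[X]) = -(X - C 1) := by
          rw [_root_.map_one]; ring
        rw [hh, Polynomial.natDegree_neg, Polynomial.natDegree_X_sub_C]
      rw [h1X, mul_one]
      exact hpdeg
    have hzero : (Polynomial.aeval M pc) u v = 0 :=
      DiamAux.aeval_apply_eq_zero_of_dist M (wGraph w) hconn hM0 pc u v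
        (Nat.lt_of_le_of_lt hdegc hlt)
    have haevalM : Polynomial.aeval M pc = Polynomial.aeval (wLap w) p := by
      rw [hpcdef, Polynomial.aeval_comp]
      have hh : (Polynomial.aeval M) (1 - X : ℝ[X]) = wLap w := by
        rw [map_sub, _root_.map_one, Polynomial.aeval_X, hLM]
      rw [hh]
    have hentry : (Polynomial.aeval (wLap w) p) u v
        = ∑ j, p.eval (ξ j) * (U u j * U v j) := by
      rw [hspec, DiamAux.aeval_conj_apply U (star U) ξ hUW hWU p u v]
      refine Finset.sum_congr rfl fun j _ => ?_
      rw [Matrix.star_apply, star_trivial]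
    have hEzero : ∑ j, p.eval (ξ j) * (U u j * U v j) = 0 := by
      rw [← hentry, ← haevalM]; exact hzero
    have hsplit : ∑ j, p.eval (ξ j) * (U u j * U v j)
        = p.eval (ξ j₀) * (U u j₀ * U v j₀)
          + ∑ j ∈ Finset.univ.erase j₀, p.eval (ξ j) * (U u j * U v j) :=
      (Finset.add_sum_erase _ _ (Finset.mem_univ j₀)).symm
    have hterm : p.eval (ξ j₀) * (U u j₀ * U v j₀)
        = Real.sqrt (wdeg w u) * Real.sqrt (wdeg w v) / vol := by
      rw [hξj₀, hp0, one_mul, hkey]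
    have htermge : δ / vol ≤ Real.sqrt (wdeg w u) * Real.sqrt (wdeg w v) / vol := by
      have h1 : Real.sqrt δ ≤ Real.sqrt (wdeg w u) := Real.sqrt_le_sqrt (hδle u)
      have h2 : Real.sqrt δ ≤ Real.sqrt (wdeg w v) := Real.sqrt_le_sqrt (hδle v)
      have h3 : δ = Real.sqrt δ * Real.sqrt δ := (Real.mul_self_sqrt hδpos.le).symm
      have h4 : δ ≤ Real.sqrt (wdeg w u) * Real.sqrt (wdeg w v) := by
        rw [h3]
        exact mul_le_mul h1 h2 (Real.sqrt_nonneg _) (Real.sqrt_nonneg _)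
      exact (div_le_div_iff_of_pos_right hvolpos).mpr h4
    have herase : ∀ z : V, ∑ j ∈ Finset.univ.erase j₀, U z j ^ 2 ≤ 1 - δ / vol := by
      intro z
      have h1 : U z j₀ ^ 2 + ∑ j ∈ Finset.univ.erase j₀, U z j ^ 2 = 1 := by
        have h1a : U z j₀ ^ 2 + ∑ j ∈ Finset.univ.erase j₀, U z j ^ 2
            = ∑ j, U z j ^ 2 :=
          Finset.add_sum_erase _ (fun j => U z j ^ 2) (Finset.mem_univ j₀)
        rw [h1a]
        exact hrow z
      have h2 : δ / vol ≤ U z j₀ ^ 2 := by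
        rw [hUj₀sq]
        exact (div_le_div_iff_of_pos_right hvolpos).mpr (hδle z)
      linarith
    have hRest : |∑ j ∈ Finset.univ.erase j₀, p.eval (ξ j) * (U u j * U v j)|
        ≤ q ^ t * (1 - δ / vol) := by
      calc |∑ j ∈ Finset.univ.erase j₀, p.eval (ξ j) * (U u j * U v j)|
          ≤ ∑ j ∈ Finset.univ.erase j₀, |p.eval (ξ j) * (U u j * U v j)| :=
            Finset.abs_sum_le_sum_abs _ _
        _ ≤ ∑ j ∈ Finset.univ.erase j₀, q ^ t * (|U u j| * |U v j|) := by
            refine Finset.sum_le_sum fun j hj => ?_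
            have hjne : j ≠ j₀ := Finset.ne_of_mem_erase hj
            obtain ⟨hb1, hb2⟩ := hξbound j hjne
            rw [abs_mul, abs_mul]
            exact mul_le_mul_of_nonneg_right (hpbound (ξ j) hb1 hb2)
              (mul_nonneg (abs_nonneg _) (abs_nonneg _))
        _ = q ^ t * ∑ j ∈ Finset.univ.erase j₀, |U u j| * |U v j| := by
            rw [Finset.mul_sum]
        _ ≤ q ^ t * (1 - δ / vol) := by
            refine mul_le_mul_of_nonneg_left ?_ hεpos.le
            have hcs := Finset.sum_mul_sq_le_sq_mul_sq (Finset.univ.erase j₀)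
              (fun j => |U u j|) (fun j => |U v j|)
            have hequ : ∑ j ∈ Finset.univ.erase j₀, |U u j| ^ 2
                = ∑ j ∈ Finset.univ.erase j₀, U u j ^ 2 :=
              Finset.sum_congr rfl fun j _ => by rw [sq_abs]
            have heqv : ∑ j ∈ Finset.univ.erase j₀, |U v j| ^ 2
                = ∑ j ∈ Finset.univ.erase j₀, U v j ^ 2 :=
              Finset.sum_congr rfl fun j _ => by rw [sq_abs]
            rw [hequ, heqv] at hcs
            have hnn : 0 ≤ ∑ j ∈ Finset.univ.erase j₀, |U u j| * |U v j| :=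
              Finset.sum_nonneg fun j _ => mul_nonneg (abs_nonneg _) (abs_nonneg _)
            have h1δ : 0 ≤ 1 - δ / vol := by linarith
            have hu' := herase u
            have hv' := herase v
            have hu0 : 0 ≤ ∑ j ∈ Finset.univ.erase j₀, U u j ^ 2 :=
              Finset.sum_nonneg fun j _ => sq_nonneg _
            have hv0 : 0 ≤ ∑ j ∈ Finset.univ.erase j₀, U v j ^ 2 :=
              Finset.sum_nonneg fun j _ => sq_nonneg _
            have hmul : (∑ j ∈ Finset.univ.erase j₀, U u j ^ 2)
                * (∑ j ∈ Finset.univ.erase j₀, U v j ^ 2) ≤ (1 - δ / vol) ^ 2 := by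
              rw [sq]
              exact mul_le_mul hu' hv' hv0 h1δ
            have hb : (∑ j ∈ Finset.univ.erase j₀, |U u j| * |U v j|) ^ 2
                ≤ (1 - δ / vol) ^ 2 := le_trans hcs hmul
            exact (pow_le_pow_iff_left₀ hnn h1δ (by norm_num)).1 hb
    have hcontr : 0 < ∑ j, p.eval (ξ j) * (U u j * U v j) := by
      rw [hsplit, hterm]
      have h5 : q ^ t * (1 - δ / vol) < δ / vol := by
        have h5a : q ^ t * (1 - δ / vol) < q ^ t * 1 :=
          mul_lt_mul_of_pos_left (by linarith) hεpos
        calc q ^ t * (1 - δ / vol) < q ^ t * 1 := h5a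
          _ = q ^ t := mul_one _
          _ ≤ δ / vol := hεδ
      have h6 := neg_abs_le (∑ j ∈ Finset.univ.erase j₀, p.eval (ξ j) * (U u j * U v j))
      linarith [htermge, hRest]
    rw [hEzero] at hcontr
    exact lt_irrefl 0 hcontr
  have hdiam : wDiam w ≤ t := by
    apply csSup_le'
    rintro k ⟨x, y, rfl⟩
    exact hdistle x y
  calc (wDiam w : ℤ) ≤ (t : ℤ) := by exact_mod_cast hdiam
    _ = ⌈a⌉ := htZ
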